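/- Under the hypotheses of the previous abstraction (module V over an algebra A with non-zero invariant form and elements w(x,y) in A satisfying w(x,y)z = <y,z>x), every A-module endomorphism of V is a scalar multiple of the identity. -/
import Mathlib


/-- Under the same hypotheses as the previous abstraction (a module `V` over a
finite-dimensional `ℂ`-algebra `A` with a symmetric invariant bilinear form
that is not identically zero, satisfying the magic identity
`w(x,y) • z = B y z • x`), every `A`-module endomorphism of `V` is a scalar
multiple of the identity. -/
theorem stmt_17 (A : Type*) [Ring A] [Algebra ℂ A] [FiniteDimensional ℂ A]
    (V : Type*) [AddCommGroup V] [Module ℂ V] [Module A V] [IsScalarTower ℂ A V]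
    (B : V →ₗ[ℂ] V →ₗ[ℂ] ℂ)
    (hsymm : ∀ u v : V, B u v = B v u)
    (hnz : ∃ u v : V, B u v ≠ 0)
    (σ : A → A)
    (hinv : ∀ (a : A) (u v : V), B u (a • v) = B (σ a • u) v)
    (hmagic : ∀ u v : V, ∃ w : A, ∀ z : V, w • z = B v z • u) :
    ∀ φ : V →ₗ[A] V, ∃ c : ℂ, ∀ v : V, φ v = c • v := by
  intro φ
  obtain ⟨u, v, huv⟩ := hnz
  -- key identity: B y z • φ x = B y (φ z) • x
  have key : ∀ x y z : V, B y z • φ x = B y (φ z) • x := by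
    intro x y z
    obtain ⟨w, hw⟩ := hmagic x y
    have h1 : φ (w • z) = w • φ z := φ.map_smul w z
    rw [hw z, hw (φ z)] at h1
    rw [← h1]
    have : φ ((B y z) • x) = (B y z) • φ x := by
      rw [← algebraMap_smul A (B y z) x, φ.map_smul, algebraMap_smul]
    rw [← this]
  refine ⟨(B u v)⁻¹ * B u (φ v), fun x => ?_⟩
  have h := key x u v
  calc φ x = (B u v)⁻¹ • (B u v • φ x) := by rw [smul_smul, inv_mul_cancel₀ huv, one_smul]
    _ = (B u v)⁻¹ • (B u (φ v) • x) := by rw [h]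
    _ = ((B u v)⁻¹ * B u (φ v)) • x := by rw [smul_smul]
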